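/- Let P be a finite set of at least two points in ℝ², L a line, x* the constrained 1-center of P on L, and F the set of farthest points of P from x*. If x* lies in the convex hull of F, then x* is the (unconstrained) Euclidean 1-center of P, i.e., x* minimizes max_{p∈P} dist(x,p) over all x ∈ ℝ². -/

import Mathlib

open scoped RealInnerProductSpace


/-- If the constrained 1-center `xstar` of `P` on the line `L` lies in the convex hull of
the set `F` of points of `P` farthest from `xstar`, then `xstar` is the unconstrained
Euclidean 1-center of `P`. -/
theorem stmt5 (P : Finset (EuclideanSpace ℝ (Fin 2))) (hP : P.Nonempty) (h2 : 2 ≤ P.card)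
    (L : AffineSubspace ℝ (EuclideanSpace ℝ (Fin 2)))
    (hL : Module.finrank ℝ L.direction = 1)
    (xstar : EuclideanSpace ℝ (Fin 2)) (hxL : xstar ∈ L)
    (hxmin : ∀ x ∈ L, P.sup' hP (fun p => dist xstar p) ≤ P.sup' hP (fun p => dist x p))
    (F : Finset (EuclideanSpace ℝ (Fin 2)))
    (hF : F = P.filter (fun p => dist p xstar = P.sup' hP (fun q => dist q xstar)))
    (hhull : xstar ∈ convexHull ℝ (F : Set (EuclideanSpace ℝ (Fin 2)))) :
    ∀ x, P.sup' hP (fun p => dist xstar p) ≤ P.sup' hP (fun p => dist x p) := by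
  intro x
  set v := x - xstar with hv
  -- find a farthest point p with ⟪v, p - xstar⟫ ≤ 0
  have key : ∃ p ∈ F, (inner ℝ v (p - xstar) : ℝ) ≤ 0 := by
    by_contra h
    push_neg at h
    have hlin : IsLinearMap ℝ (fun y : EuclideanSpace ℝ (Fin 2) => (inner ℝ v y : ℝ)) :=
      ⟨fun a b => inner_add_right v a b, fun c a => real_inner_smul_right v a c⟩
    have hconv : Convex ℝ {y : EuclideanSpace ℝ (Fin 2) | (inner ℝ v xstar : ℝ) < inner ℝ v y} :=
      convex_halfSpace_gt hlin _
    have hsub : (F : Set (EuclideanSpace ℝ (Fin 2))) ⊆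
        {y | (inner ℝ v xstar : ℝ) < inner ℝ v y} := by
      intro p hp
      have := h p hp
      rw [inner_sub_right] at this
      simpa using this
    have := convexHull_min hsub hconv hhull
    simp at this
  obtain ⟨p, hpF, hip⟩ := key
  rw [hF, Finset.mem_filter] at hpF
  obtain ⟨hpP, hpd⟩ := hpF
  have hsymm : P.sup' hP (fun p => dist xstar p) = P.sup' hP (fun q => dist q xstar) := by
    apply Finset.sup'_congr hP rfl
    intro q _; exact dist_comm xstar q
  have h1 : dist xstar p ≤ dist x p := by
    have hxp : x - p = v - (p - xstar) := by rw [hv]; abel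
    rw [dist_eq_norm, dist_eq_norm, hxp, show xstar - p = -(p - xstar) by abel, norm_neg]
    have hsq := norm_sub_sq_real v (p - xstar)
    nlinarith [norm_nonneg (v - (p - xstar)), norm_nonneg (p - xstar)]
  calc P.sup' hP (fun p => dist xstar p) = dist p xstar := by rw [hsymm, hpd]
    _ = dist xstar p := dist_comm p xstar
    _ ≤ dist x p := h1
    _ ≤ P.sup' hP (fun q => dist x q) := Finset.le_sup' _ hpP
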